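/- Let F be a complete set of filters on n channels all of whose elements have the same size, and let F' ⊆ F be such that every C ∈ F is subsumed by some C' ∈ F'. Then F' is a complete set of filters on n channels. -/

import Mathlib

/-- Applying a single comparator `c = (i, j)`: the minimum of the two values goes to
channel `i` and the maximum to channel `j`. -/
def applyComp {n : ℕ} {α : Type*} [LinearOrder α] (c : Fin n × Fin n) (x : Fin n → α) :
    Fin n → α :=
  fun k => if k = c.1 then min (x c.1) (x c.2)
    else if k = c.2 then max (x c.1) (x c.2)
    else x k

/-- Propagating an input vector through a comparator network (a list of comparators). -/
def runNet {n : ℕ} {α : Type*} [LinearOrder α] (C : List (Fin n × Fin n)) (x : Fin n → α) :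
    Fin n → α :=
  C.foldl (fun v c => applyComp c v) x

/-- A standard comparator network: every comparator `(i, j)` satisfies `i < j`. -/
def Standard {n : ℕ} (C : List (Fin n × Fin n)) : Prop :=
  ∀ c ∈ C, c.1 < c.2

/-- A sorting network: a standard comparator network sorting every Boolean input. -/
def IsSortingNet {n : ℕ} (C : List (Fin n × Fin n)) : Prop :=
  Standard C ∧ ∀ x : Fin n → Bool, Monotone (runNet C x)

/-- The set of outputs of a comparator network on Boolean inputs. -/
def outputs {n : ℕ} (C : List (Fin n × Fin n)) : Set (Fin n → Bool) :=
  Set.range (runNet C)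

/-- The action of a permutation of channels on a set of Boolean vectors. -/
def permSet {n : ℕ} (π : Equiv.Perm (Fin n)) (S : Set (Fin n → Bool)) :
    Set (Fin n → Bool) :=
  (fun x => x ∘ ⇑π.symm) '' S

/-- `Ca` subsumes `Cb`: some permutation maps `outputs Ca` into `outputs Cb`. -/
def Subsumes {n : ℕ} (Ca Cb : List (Fin n × Fin n)) : Prop :=
  ∃ π : Equiv.Perm (Fin n), permSet π (outputs Ca) ⊆ outputs Cb

/-- `sortSize n` is the least size of a sorting network on `n` channels. -/
noncomputable def sortSize (n : ℕ) : ℕ :=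
  sInf {k | ∃ C : List (Fin n × Fin n), IsSortingNet C ∧ C.length = k}

/-- Number of ones in a Boolean vector. -/
def ones {n : ℕ} (x : Fin n → Bool) : ℕ :=
  (Finset.univ.filter fun i => x i = true).card

/-- A (finite) complete set of filters on `n` channels. -/
def CompleteFilters (n : ℕ) (F : Finset (List (Fin n × Fin n))) : Prop :=
  (∃ C : List (Fin n × Fin n), IsSortingNet C ∧ C.length = sortSize n) ↔
    (∃ C ∈ F, ∃ C' : List (Fin n × Fin n),
      IsSortingNet (C ++ C') ∧ (C ++ C').length = sortSize n)

/-- `wSet C x k` is the set of positions `i` such that some output vector of `C`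
with exactly `k` ones has value `x` at position `i`. -/
def wSet {n : ℕ} (C : List (Fin n × Fin n)) (x : Bool) (k : ℕ) : Set (Fin n) :=
  {i | ∃ v ∈ outputs C, ones v = k ∧ v i = x}

namespace PruneAux
variable {n : ℕ}

lemma runNet_cons (c : Fin n × Fin n) (C : List (Fin n × Fin n)) (x : Fin n → Bool) :
    runNet (c :: C) x = runNet C (applyComp c x) := rfl

lemma runNet_append (A B : List (Fin n × Fin n)) (x : Fin n → Bool) :
    runNet (A ++ B) x = runNet B (runNet A x) := List.foldl_append

lemma applyComp_perm (σ : Equiv.Perm (Fin n)) (c : Fin n × Fin n) (v : Fin n → Bool) :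
    applyComp (σ c.1, σ c.2) v = applyComp c (v ∘ ⇑σ) ∘ ⇑σ.symm := by
  funext k
  simp only [applyComp, Function.comp_apply, Equiv.symm_apply_eq, Equiv.apply_symm_apply]

lemma runNet_map_perm (σ : Equiv.Perm (Fin n)) (C : List (Fin n × Fin n)) (v : Fin n → Bool) :
    runNet (C.map fun d => (σ d.1, σ d.2)) v = runNet C (v ∘ ⇑σ) ∘ ⇑σ.symm := by
  induction C generalizing v with
  | nil =>
      funext k; simp [runNet]
  | cons c B ih =>
      simp only [List.map_cons]
      rw [runNet_cons, runNet_cons, applyComp_perm, ih]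
      have : (applyComp c (v ∘ ⇑σ) ∘ ⇑σ.symm) ∘ ⇑σ = applyComp c (v ∘ ⇑σ) := by
        funext k; simp
      rw [this]

lemma applyComp_flip (i j : Fin n) (v : Fin n → Bool) :
    applyComp (j, i) v = applyComp (i, j) v ∘ ⇑(Equiv.swap i j) := by
  funext k
  simp only [applyComp, Function.comp_apply]
  rcases eq_or_ne k i with rfl | hki
  · rcases eq_or_ne k j with rfl | hkj
    · simp
    · simp [Equiv.swap_apply_left, hkj, Ne.symm hkj, min_comm, max_comm]
  · rcases eq_or_ne k j with rfl | hkj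
    · simp [Equiv.swap_apply_right, hki, Ne.symm hki, min_comm, max_comm]
    · simp [Equiv.swap_apply_of_ne_of_ne hki hkj, hki, hkj]

def untangle : List (Fin n × Fin n) → List (Fin n × Fin n)
  | [] => []
  | c :: B =>
    if c.1 < c.2 then c :: untangle B
    else if c.2 < c.1 then
      (c.2, c.1) :: untangle (B.map fun d => (Equiv.swap c.1 c.2 d.1, Equiv.swap c.1 c.2 d.2))
    else c :: untangle B
  termination_by l => l.length
  decreasing_by all_goals simp

lemma untangle_length (N : List (Fin n × Fin n)) : (untangle N).length = N.length := by
  induction N using untangle.induct with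
  | case1 => simp [untangle]
  | case2 c B h ih => rw [untangle]; simp [if_pos h, ih]
  | case3 c B h1 h2 ih =>
      simp only [List.map_attach_eq_pmap, List.pmap_eq_map] at ih
      rw [untangle]; simp [if_neg h1, if_pos h2, ih]
  | case4 c B h1 h2 ih => rw [untangle]; simp [if_neg h1, if_neg h2, ih]

lemma untangle_standard (N : List (Fin n × Fin n)) (h : ∀ c ∈ N, c.1 ≠ c.2) :
    Standard (untangle N) := by
  induction N using untangle.induct with
  | case1 => intro c hc; simp [untangle] at hc
  | case2 c B h1 ih =>
      rw [untangle, if_pos h1]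
      intro d hd
      rcases List.mem_cons.mp hd with rfl | hd
      · exact h1
      · exact ih (fun e he => h e (List.mem_cons_of_mem c he)) d hd
  | case3 c B h1 h2 ih =>
      simp only [List.map_attach_eq_pmap, List.pmap_eq_map] at ih
      rw [untangle, if_neg h1, if_pos h2]
      intro d hd
      rcases List.mem_cons.mp hd with rfl | hd
      · exact h2
      · refine ih ?_ d hd
        intro e he
        simp only [List.mem_map] at he
        obtain ⟨e', he', rfl⟩ := he
        exact fun hee => h e' (List.mem_cons_of_mem c he')
          ((Equiv.swap c.1 c.2).injective hee)
  | case4 c B h1 h2 ih =>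
      exact absurd (le_antisymm (not_lt.mp h2) (not_lt.mp h1))
        (h c List.mem_cons_self)

lemma untangle_spec (N : List (Fin n × Fin n)) :
    ∃ σ : Equiv.Perm (Fin n), ∀ x : Fin n → Bool,
      runNet (untangle N) x = runNet N x ∘ ⇑σ := by
  induction N using untangle.induct with
  | case1 =>
      exact ⟨1, fun x => by funext k; simp [untangle, runNet]⟩
  | case2 c B h1 ih =>
      obtain ⟨σ, hσ⟩ := ih
      refine ⟨σ, fun x => ?_⟩
      rw [untangle, if_pos h1, runNet_cons, runNet_cons, hσ]
  | case3 c B h1 h2 ih =>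
      simp only [List.map_attach_eq_pmap, List.pmap_eq_map] at ih
      obtain ⟨σ, hσ⟩ := ih
      refine ⟨σ.trans (Equiv.swap c.1 c.2), fun x => ?_⟩
      rw [untangle, if_neg h1, if_pos h2, runNet_cons, hσ, runNet_map_perm]
      have h3 : applyComp (c.2, c.1) x ∘ ⇑(Equiv.swap c.1 c.2) = applyComp c x := by
        rw [applyComp_flip c.1 c.2 x]
        funext k
        simp
      rw [h3, runNet_cons]
      funext k
      simp
  | case4 c B h1 h2 ih =>
      obtain ⟨σ, hσ⟩ := ih
      refine ⟨σ, fun x => ?_⟩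
      rw [untangle, if_neg h1, if_neg h2, runNet_cons, runNet_cons, hσ]

lemma applyComp_of_monotone {c : Fin n × Fin n} (hc : c.1 < c.2) {v : Fin n → Bool}
    (hv : Monotone v) : applyComp c v = v := by
  funext k
  simp only [applyComp]
  split_ifs with h1 h2
  · rw [h1]; exact min_eq_left (hv hc.le)
  · rw [h2]; exact max_eq_right (hv hc.le)
  · rfl

lemma runNet_of_monotone {N : List (Fin n × Fin n)} (hN : Standard N) {v : Fin n → Bool}
    (hv : Monotone v) : runNet N v = v := by
  induction N with
  | nil => rfl
  | cons c B ih =>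
      rw [runNet_cons, applyComp_of_monotone (hN c List.mem_cons_self) hv]
      exact ih (fun d hd => hN d (List.mem_cons_of_mem c hd))

lemma ones_comp_perm (v : Fin n → Bool) (σ : Equiv.Perm (Fin n)) :
    ones (v ∘ ⇑σ) = ones v := by
  rw [ones, ones, ← Fintype.card_subtype, ← Fintype.card_subtype]
  exact Fintype.card_congr (σ.subtypeEquiv fun a => Iff.rfl)

lemma mono_true_of {a b : Fin n → Bool} (ha : Monotone a) (hb : Monotone b)
    (h : ones a = ones b) {i : Fin n} (hi : a i = true) : b i = true := by
  by_contra hbi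
  have hbi' : b i = false := Bool.eq_false_iff.mpr hbi
  have hmem : i ∈ Finset.univ.filter fun j => a j = true := by simp [hi]
  have hsub : (Finset.univ.filter fun j => b j = true) ⊆
      (Finset.univ.filter fun j => a j = true).erase i := by
    intro j hj
    simp only [Finset.mem_filter, Finset.mem_erase, Finset.mem_univ, true_and] at hj ⊢
    have hij : i < j := by
      by_contra hle
      push_neg at hle
      have h2 := hb hle
      rw [hj, hbi'] at h2
      exact absurd h2 (by simp)
    have h3 := ha hij.le
    rw [hi] at h3
    refine ⟨hij.ne', ?_⟩
    revert h3; cases a j <;> simp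
  have := (Finset.card_le_card hsub).trans_lt (Finset.card_erase_lt_of_mem hmem)
  rw [← ones, ← ones] at this
  omega

lemma mono_unique {a b : Fin n → Bool} (ha : Monotone a) (hb : Monotone b)
    (h : ones a = ones b) : a = b := by
  funext i
  cases hai : a i <;> cases hbi : b i
  · rfl
  · exact absurd (mono_true_of hb ha h.symm hbi) (by simp [hai])
  · exact absurd (mono_true_of ha hb h hai) (by simp [hbi])
  · rfl

lemma perm_eq_id (ρ : Equiv.Perm (Fin n)) (h : ∀ j, j ≤ ρ j) (j : Fin n) : ρ j = j := by
  have hsum : ∑ i : Fin n, ((i : ℕ)) = ∑ i : Fin n, ((ρ i : ℕ)) :=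
    (Equiv.sum_comp ρ (fun i => (i : ℕ))).symm
  have hle : ∀ i ∈ Finset.univ, ((i : Fin n) : ℕ) ≤ ((ρ i : Fin n) : ℕ) :=
    fun i _ => Fin.le_def.mp (h i)
  have hall := (Finset.sum_eq_sum_iff_of_le hle).mp hsum
  exact (Fin.ext ((hall j (Finset.mem_univ j)).symm))

end PruneAux

/-- Pruning preserves completeness: if `F` is a complete set of filters whose elements all
have the same size, and `F' ⊆ F` is such that every `C ∈ F` is subsumed by some `C' ∈ F'`,
then `F'` is a complete set of filters. -/

theorem prune_preserves_completeness (n : ℕ) (F F' : Finset (List (Fin n × Fin n)))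
    (hstd : ∀ C ∈ F, Standard C) (hF : CompleteFilters n F)
    (hsize : ∃ k : ℕ, ∀ C ∈ F, C.length = k) (hsub : F' ⊆ F)
    (hcover : ∀ C ∈ F, ∃ C' ∈ F', Subsumes C' C) :
    CompleteFilters n F' := by
  constructor
  · intro hex
    obtain ⟨C, hC, C', hsort, hlen⟩ := hF.mp hex
    obtain ⟨D, hD, π, hπ⟩ := hcover C hC
    obtain ⟨k, hk⟩ := hsize
    set E0 : List (Fin n × Fin n) := C'.map (fun d => (π.symm d.1, π.symm d.2)) with hE0
    obtain ⟨σ, hσ⟩ := PruneAux.untangle_spec E0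
    set E := PruneAux.untangle E0 with hE
    set ρ : Equiv.Perm (Fin n) := σ.trans π with hρdef
    -- key structural property
    have key : ∀ x : Fin n → Bool, ∃ m : Fin n → Bool,
        Monotone m ∧ runNet (D ++ E) x = m ∘ ⇑ρ := by
      intro x
      have h1 : runNet D x ∘ ⇑π.symm ∈ outputs C :=
        hπ ⟨runNet D x, ⟨x, rfl⟩, rfl⟩
      obtain ⟨y, hy⟩ := h1
      refine ⟨runNet (C ++ C') y, hsort.2 y, ?_⟩
      rw [PruneAux.runNet_append, hE, hσ, hE0, PruneAux.runNet_map_perm,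
        Equiv.symm_symm, ← hy, ← PruneAux.runNet_append]
      rfl
    -- standardness
    have hstdD : Standard D := hstd D (hsub hD)
    have hstdE : Standard E := by
      refine PruneAux.untangle_standard E0 ?_
      intro c hc
      rw [hE0] at hc
      simp only [List.mem_map] at hc
      obtain ⟨d, hd, rfl⟩ := hc
      exact fun hdd => (hsort.1 d (List.mem_append_right C hd)).ne
        (π.symm.injective hdd)
    have hstdDE : Standard (D ++ E) := by
      intro c hc
      rcases List.mem_append.mp hc with h | h
      · exact hstdD c h
      · exact hstdE c h
    -- ρ is the identity
    have hρ : ∀ j, ρ j = j := by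
      have hsymm : ∀ i : Fin n, i ≤ ρ.symm i := by
        intro i
        set v : Fin n → Bool := fun j => decide ((i : ℕ) ≤ (j : ℕ)) with hv
        have hvm : Monotone v := by
          intro a b hab
          rw [hv]
          simp only
          cases h1 : decide ((i : ℕ) ≤ (a : ℕ))
          · exact Bool.false_le _
          · have : (i : ℕ) ≤ (b : ℕ) := (of_decide_eq_true h1).trans (Fin.le_def.mp hab)
            rw [decide_eq_true this]
        obtain ⟨m, hm, hme⟩ := key v
        rw [PruneAux.runNet_of_monotone hstdDE hvm] at hme
        have hmeq : m = v ∘ ⇑ρ.symm := by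
          funext kk
          have := congrFun hme (ρ.symm kk)
          simp only [Function.comp_apply, Equiv.apply_symm_apply] at this ⊢
          exact this.symm
        have hones : ones m = ones v := by
          rw [hmeq]; exact PruneAux.ones_comp_perm v ρ.symm
        have huniq : m = v := PruneAux.mono_unique hm hvm hones
        have h5 := congrFun (hmeq.symm.trans huniq) i
        simp only [Function.comp_apply, hv] at h5
        have h6 : decide ((i : ℕ) ≤ ((ρ.symm i : Fin n) : ℕ)) = true := by
          rw [h5]; exact decide_eq_true le_rfl
        exact Fin.le_def.mpr (of_decide_eq_true h6)
      intro j
      have := PruneAux.perm_eq_id ρ.symm hsymm (ρ j)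
      rw [Equiv.symm_apply_apply] at this
      exact this.symm
    refine ⟨D, hD, E, ⟨hstdDE, ?_⟩, ?_⟩
    · intro x
      obtain ⟨m, hm, hme⟩ := key x
      have : m ∘ ⇑ρ = m := by
        funext kk; rw [Function.comp_apply, hρ kk]
      rw [hme, this]
      exact hm
    · have hDlen : D.length = C.length := by rw [hk D (hsub hD), hk C hC]
      have hElen : E.length = C'.length := by
        rw [hE, PruneAux.untangle_length, hE0, List.length_map]
      rw [List.length_append, hDlen, hElen, ← List.length_append, hlen]
  · rintro ⟨C, _, C', h1, h2⟩
    exact ⟨C ++ C', h1, h2⟩
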